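/- Let H be a complex Hilbert space, (X, ν) a measure space, and ψ : X → H a family such that x ↦ ⟨ψ_x, f⟩ is ν-measurable for every f ∈ H, with analysis operator C defined on Dom(C) = {f ∈ H : x ↦ ⟨ψ_x, f⟩ ∈ L²(X, ν)}. If ψ_y ∈ Dom(C) for every y ∈ X, then Dom(C) is dense in H. -/

import Mathlib

open MeasureTheory Filter
open scoped ComplexInnerProductSpace ENNReal

/-- If every vector `ψ y` of the family belongs to the domain of the
analysis operator `C` (i.e. its coefficient function is in `L²(X, ν)`), then
`Dom(C) = {f | (fun x => ⟪ψ x, f⟫) ∈ L²(X, ν)}` is dense in `H`. -/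
theorem analysis_operator_densely_defined
    {H : Type*} [NormedAddCommGroup H] [InnerProductSpace ℂ H] [CompleteSpace H]
    {X : Type*} [MeasurableSpace X] (ν : Measure X)
    (ψ : X → H)
    (hmeas : ∀ f : H, AEMeasurable (fun x => ⟪ψ x, f⟫) ν)
    (hdom : ∀ y : X, MemLp (fun x => ⟪ψ x, ψ y⟫) 2 ν) :
    Dense {f : H | MemLp (fun x => ⟪ψ x, f⟫) 2 ν} := by
  set D : Submodule ℂ H :=
    { carrier := {f : H | MemLp (fun x => ⟪ψ x, f⟫) 2 ν}
      zero_mem' := by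
        have : (fun x : X => ⟪ψ x, (0 : H)⟫) = fun _ => (0 : ℂ) := by
          funext x; simp
        simpa [Set.mem_setOf_eq, this] using MemLp.zero' (μ := ν) (p := 2)
      add_mem' := by
        intro f g hf hg
        have := hf.add hg
        simpa [Set.mem_setOf_eq, inner_add_right, Pi.add_def] using this
      smul_mem' := by
        intro c f hf
        have := hf.const_smul c
        simpa [Set.mem_setOf_eq, inner_smul_right, Pi.smul_def, smul_eq_mul] using this }
  have hD : Dense (D : Set H) := by
    rw [Submodule.dense_iff_topologicalClosure_eq_top,
      Submodule.topologicalClosure_eq_top_iff]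
    set S : Submodule ℂ H := Submodule.span ℂ (Set.range ψ)
    have hSD : Sᗮ ≤ D := by
      intro f hf
      have hzero : (fun x : X => ⟪ψ x, f⟫) = fun _ => (0 : ℂ) := by
        funext x
        exact hf (ψ x) (Submodule.subset_span ⟨x, rfl⟩)
      show MemLp (fun x => ⟪ψ x, f⟫) 2 ν
      simpa [hzero] using MemLp.zero' (μ := ν) (p := 2)
    rw [Submodule.eq_bot_iff]
    intro v hv
    have hvS : v ∈ Sᗮ := by
      apply (Submodule.mem_orthogonal S v).mpr
      intro u hu
      induction hu using Submodule.span_induction with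
      | mem u hu =>
        obtain ⟨y, rfl⟩ := hu
        exact hv (ψ y) (hdom y)
      | zero => simp
      | add u w _ _ hu hw => simp [inner_add_left, hu, hw]
      | smul c u _ hu => simp [inner_smul_left, hu]
    have hvSbb : v ∈ Sᗮᗮ := fun u hu => hv u (hSD hu)
    have : ⟪v, v⟫ = 0 := hvSbb v hvS
    simpa using inner_self_eq_zero.mp this
  exact hD
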